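/- Let p be prime, d ≥ 1, q = p^d, and 3 ≤ l ≤ q. The (q-l+1) × (q-1) matrix M over F_p, whose rows are the coefficient vectors (in degrees 1 through q-1) of the polynomials (1+x)^l - 1, x(1+x)^l, ..., x^{q-l-1}(1+x)^l, and x^{q-l}(1+x)^l - x^q, has rank exactly q - l over F_p. -/

import Mathlib

open Polynomial

/-- The `i`-th row polynomial of the paper's matrix `M` (equation (3)):
`(1+x)^l - 1` for `i = 0`, `x^(q-l)(1+x)^l - x^q` for `i = q-l`, and
`x^i (1+x)^l` for `0 < i < q-l`. -/
noncomputable def rowPoly (R : Type*) [CommRing R] (q l i : ℕ) : R[X] :=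
  if i = 0 then (1 + X) ^ l - 1
  else if i = q - l then X ^ (q - l) * (1 + X) ^ l - X ^ q
  else X ^ i * (1 + X) ^ l

/-- The paper's `(q-l+1) × (q-1)` matrix `M`: the `(i, j)` entry is the
coefficient of `x^(j+1)` in the `i`-th row polynomial, i.e. the rows are the
coefficient vectors (in degrees `1` through `q-1`) of the polynomials
`(1+x)^l - 1, x(1+x)^l, ..., x^(q-l-1)(1+x)^l, x^(q-l)(1+x)^l - x^q`. -/
noncomputable def paperM (R : Type*) [CommRing R] (q l : ℕ) :
    Matrix (Fin (q - l + 1)) (Fin (q - 1)) R :=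
  fun i j => (rowPoly R q l i).coeff ((j : ℕ) + 1)

lemma rowPoly_eq (R : Type*) [CommRing R] (q l i : ℕ) :
    rowPoly R q l i = X ^ i * (1 + X) ^ l
      - (if i = 0 then 1 else if i = q - l then X ^ q else 0) := by
  by_cases h1 : i = 0
  · simp [rowPoly, h1]
  · by_cases h2 : i = q - l
    · have h3 : q - l ≠ 0 := fun h => h1 (h2.trans h)
      simp [rowPoly, h1, h2, h3]
    · simp [rowPoly, h1, h2]

lemma keySum (p d q l : ℕ) [Fact p.Prime] (hq : q = p ^ d) (hlq : l ≤ q)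
    (jn : ℕ) (h0 : jn ≠ 0) (hjq : jn < q) :
    ∑ i ∈ Finset.range (q - l + 1),
      ((q - l).choose i : ZMod p) * (rowPoly (ZMod p) q l i).coeff jn = 0 := by
  have hml : q - l + l = q := Nat.sub_add_cancel hlq
  have hS : ∑ i ∈ Finset.range (q - l + 1),
      C ((q - l).choose i : ZMod p) * (X ^ i * (1 + X) ^ l) = 1 + X ^ q := by
    have hbin : ∑ i ∈ Finset.range (q - l + 1), C ((q - l).choose i : ZMod p) * X ^ i
        = ((1 : (ZMod p)[X]) + X) ^ (q - l) := by
      rw [add_comm (1 : (ZMod p)[X]) X, add_pow]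
      refine Finset.sum_congr rfl fun i _ => ?_
      simp only [Polynomial.C_eq_natCast, one_pow, mul_one]
      ring
    calc ∑ i ∈ Finset.range (q - l + 1),
          C ((q - l).choose i : ZMod p) * (X ^ i * (1 + X) ^ l)
        = (∑ i ∈ Finset.range (q - l + 1), C ((q - l).choose i : ZMod p) * X ^ i)
            * (1 + X) ^ l := by
          rw [Finset.sum_mul]
          exact Finset.sum_congr rfl fun i _ => (mul_assoc _ _ _).symm
      _ = (1 + X) ^ (q - l) * (1 + X) ^ l := by rw [hbin]
      _ = (1 + X) ^ q := by rw [← pow_add, hml]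
      _ = 1 + X ^ q := by
          rw [hq]
          simpa using add_pow_char_pow (R := (ZMod p)[X]) 1 X (p := p) (n := d)
  have step1 : ∑ i ∈ Finset.range (q - l + 1),
      ((q - l).choose i : ZMod p) * (rowPoly (ZMod p) q l i).coeff jn
      = (∑ i ∈ Finset.range (q - l + 1),
          C ((q - l).choose i : ZMod p) * rowPoly (ZMod p) q l i).coeff jn := by
    rw [Polynomial.finset_sum_coeff]
    exact Finset.sum_congr rfl fun i _ => (Polynomial.coeff_C_mul _).symm
  have hsplit : ∑ i ∈ Finset.range (q - l + 1),
      C ((q - l).choose i : ZMod p) * rowPoly (ZMod p) q l i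
      = (1 + X ^ q)
        - ∑ i ∈ Finset.range (q - l + 1), C ((q - l).choose i : ZMod p)
            * (if i = 0 then 1 else if i = q - l then X ^ q else 0) := by
    rw [← hS, ← Finset.sum_sub_distrib]
    exact Finset.sum_congr rfl fun i _ => by rw [rowPoly_eq, mul_sub]
  have h1 : ((1 : (ZMod p)[X]) + X ^ q).coeff jn = 0 := by
    simp [Polynomial.coeff_one, Polynomial.coeff_X_pow, h0, Nat.ne_of_lt hjq]
  have h2 : (∑ i ∈ Finset.range (q - l + 1), C ((q - l).choose i : ZMod p)
      * (if i = 0 then 1 else if i = q - l then X ^ q else 0)).coeff jn = 0 := by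
    rw [Polynomial.finset_sum_coeff]
    refine Finset.sum_eq_zero fun i _ => ?_
    rw [Polynomial.coeff_C_mul]
    split_ifs with ha hb
    · simp [Polynomial.coeff_one, h0]
    · simp [Polynomial.coeff_X_pow, Nat.ne_of_lt hjq]
    · simp
  rw [step1, hsplit, Polynomial.coeff_sub, h1, h2, sub_zero]

/-- For `p` prime, `q = p^d` (`d ≥ 1`), `3 ≤ l ≤ q`, the matrix
`M` has rank exactly `q - l` over `F_p`. -/
theorem paperM_rank_zmod (p d l q : ℕ) (hp : p.Prime) (hd : 0 < d)
    (hq : q = p ^ d) (hl : 3 ≤ l) (hlq : l ≤ q) :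
    (paperM (ZMod p) q l).rank = q - l := by
  classical
  haveI : Fact p.Prime := ⟨hp⟩
  have hq3 : 3 ≤ q := hl.trans hlq
  set M := paperM (ZMod p) q l with hM
  have hub : M.rank ≤ q - l := by
    set E : Matrix (Fin (q - l + 1)) (Fin (q - l)) (ZMod p) :=
      fun i k => if (i : ℕ) = 0 then -(((q - l).choose ((k : ℕ) + 1) : ZMod p))
        else if (i : ℕ) = (k : ℕ) + 1 then 1 else 0 with hE
    have hfac : M = E * M.submatrix Fin.succ id := by
      ext i j
      rw [Matrix.mul_apply]
      by_cases hi : (i : ℕ) = 0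
      · have hj1 : (j : ℕ) + 1 < q := by have := j.isLt; omega
        have hkey := keySum p d q l hq hlq ((j : ℕ) + 1) (Nat.succ_ne_zero _) hj1
        rw [Finset.sum_range_succ'] at hkey
        have hkey' : (∑ k ∈ Finset.range (q - l),
            ((q - l).choose (k + 1) : ZMod p)
              * (rowPoly (ZMod p) q l (k + 1)).coeff ((j : ℕ) + 1))
            + (rowPoly (ZMod p) q l 0).coeff ((j : ℕ) + 1) = 0 := by
          simpa using hkey
        have hfin : ∀ k : Fin (q - l), E i k * M.submatrix Fin.succ id k j
            = -(((q - l).choose ((k : ℕ) + 1) : ZMod p)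
                * (rowPoly (ZMod p) q l ((k : ℕ) + 1)).coeff ((j : ℕ) + 1)) := by
          intro k
          have hi0 : i = 0 := Fin.ext (by simp [hi])
          simp [hE, hi, hi0, hM, paperM, Fin.val_succ, neg_mul]
        have hMij : M i j = (rowPoly (ZMod p) q l 0).coeff ((j : ℕ) + 1) := by
          simp [hM, paperM, hi]
        rw [hMij, Finset.sum_congr rfl fun k _ => hfin k,
          Fin.sum_univ_eq_sum_range (fun t => -(((q - l).choose (t + 1) : ZMod p)
            * (rowPoly (ZMod p) q l (t + 1)).coeff ((j : ℕ) + 1))) (q - l)]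
        rw [Finset.sum_neg_distrib]
        linear_combination hkey'
      · have ht : (i : ℕ) - 1 < q - l := by have := i.isLt; omega
        rw [Finset.sum_eq_single (⟨(i : ℕ) - 1, ht⟩ : Fin (q - l))]
        · have h2 : (i : ℕ) - 1 + 1 = (i : ℕ) := by omega
          have hi0 : i ≠ 0 := fun h => hi (by simp [h])
          simp [hE, hi, hi0, hM, paperM, Fin.val_succ, h2]
        · intro k _ hk
          have hne : (i : ℕ) ≠ (k : ℕ) + 1 := by
            intro h
            apply hk
            apply Fin.ext
            simp only
            omega
          have hi0 : i ≠ 0 := fun h => hi (by simp [h])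
          simp [hE, hi, hi0, hne]
        · intro h; exact absurd (Finset.mem_univ _) h
    calc M.rank = (E * M.submatrix Fin.succ id).rank := by rw [← hfac]
      _ ≤ (M.submatrix Fin.succ id).rank := Matrix.rank_mul_le_right _ _
      _ ≤ q - l := by simpa using Matrix.rank_le_card_height (M.submatrix Fin.succ id)
  have hlb : q - l ≤ M.rank := by
    have hc : ∀ k : Fin (q - l), (k : ℕ) < q - 1 := fun k => by have := k.isLt; omega
    set c : Fin (q - l) → Fin (q - 1) := fun k => ⟨k, hc k⟩ with hcdef
    set B : Matrix (Fin (q - l)) (Fin (q - l)) (ZMod p) := M.submatrix Fin.succ c with hB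
    have hBentry : ∀ i j : Fin (q - l), B i j
        = if (i : ℕ) ≤ (j : ℕ)
            then ((1 + X : (ZMod p)[X]) ^ l).coeff ((j : ℕ) - (i : ℕ)) else 0 := by
      intro i j
      have hj1 : (j : ℕ) + 1 < q := by have := j.isLt; omega
      have hrow : (rowPoly (ZMod p) q l ((i : ℕ) + 1)).coeff ((j : ℕ) + 1)
          = (X ^ ((i : ℕ) + 1) * (1 + X) ^ l : (ZMod p)[X]).coeff ((j : ℕ) + 1) := by
        rw [rowPoly_eq, Polynomial.coeff_sub, if_neg (Nat.succ_ne_zero (i : ℕ))]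
        by_cases hb : (i : ℕ) + 1 = q - l
        · rw [if_pos hb]
          simp [Polynomial.coeff_X_pow, Nat.ne_of_lt hj1]
        · rw [if_neg hb]
          simp
      have hBij : B i j = (rowPoly (ZMod p) q l ((i : ℕ) + 1)).coeff ((j : ℕ) + 1) := by
        simp [hB, hcdef, hM, paperM, Fin.val_succ]
      rw [hBij, hrow, mul_comm, Polynomial.coeff_mul_X_pow']
      by_cases h : (i : ℕ) ≤ (j : ℕ)
      · rw [if_pos (by omega), if_pos h]
        congr 1
        omega
      · rw [if_neg (by omega), if_neg h]
    have htri : B.BlockTriangular id := by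
      intro i j hji
      rw [hBentry, if_neg (by exact fun h => absurd h (by exact Nat.not_le.mpr hji))]
    have hdiag : ∀ i : Fin (q - l), B i i = 1 := by
      intro i
      rw [hBentry, if_pos le_rfl, Nat.sub_self, Polynomial.coeff_zero_eq_eval_zero]
      simp
    have hdet : B.det = 1 := by
      rw [Matrix.det_of_upperTriangular htri]
      simp [hdiag]
    have hBrank : B.rank = q - l := by
      have hu : IsUnit B := (Matrix.isUnit_iff_isUnit_det B).mpr (by rw [hdet]; exact isUnit_one)
      simpa using B.rank_of_isUnit hu
    have hfac2 : B = (1 : Matrix (Fin (q - l + 1)) (Fin (q - l + 1)) (ZMod p)).submatrix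
          Fin.succ (Equiv.refl _) * M
        * (1 : Matrix (Fin (q - 1)) (Fin (q - 1)) (ZMod p)).submatrix (Equiv.refl _) c := by
      rw [Matrix.mul_submatrix_one, Matrix.one_submatrix_mul]
      simp [hB, Matrix.submatrix_submatrix]
    calc q - l = B.rank := hBrank.symm
      _ ≤ ((1 : Matrix (Fin (q - l + 1)) (Fin (q - l + 1)) (ZMod p)).submatrix
            Fin.succ (Equiv.refl _) * M).rank := by
          rw [hfac2]; exact Matrix.rank_mul_le_left _ _
      _ ≤ M.rank := Matrix.rank_mul_le_right _ _
  exact le_antisymm hub hlb
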